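/- Let p be an odd prime and g a primitive root modulo p. The set S = {(x mod (p−1), g^x mod p) : x = 0, 1, …, p−2} is a Sidon set in the group Z_{p−1} × Z_p, i.e., for any elements s₁, s₂, s₃, s₄ ∈ S with s₁ + s₂ = s₃ + s₄, we have {s₁, s₂} = {s₃, s₄}. -/
import Mathlib


theorem stmt_5 (p : ℕ) (hp : p.Prime) (hodd : Odd p) (g : (ZMod p)ˣ)
    (hg : ∀ u : (ZMod p)ˣ, ∃ k : ℕ, g ^ k = u)
    (S : Set (ZMod (p - 1) × ZMod p))
    (hS : S = {s | ∃ x : ℕ, x ≤ p - 2 ∧ s = ((x : ZMod (p - 1)), ((g : ZMod p)) ^ x)}) :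
    ∀ s₁ ∈ S, ∀ s₂ ∈ S, ∀ s₃ ∈ S, ∀ s₄ ∈ S,
      s₁ + s₂ = s₃ + s₄ → (s₁ = s₃ ∧ s₂ = s₄) ∨ (s₁ = s₄ ∧ s₂ = s₃) := by
  haveI := Fact.mk hp
  have hp2 : p ≠ 2 := by rintro rfl; exact (by decide : ¬ Odd 2) hodd
  have hp3 : 3 ≤ p := by have := hp.two_le; omega
  have hord : orderOf g = p - 1 := by
    have h := orderOf_eq_card_of_forall_mem_zpowers (fun u => by
      obtain ⟨k, hk⟩ := hg u
      exact ⟨(k : ℤ), by simpa using hk⟩)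
    rwa [Nat.card_eq_fintype_card, ZMod.card_units_eq_totient, Nat.totient_prime hp] at h
  have hinj : ∀ x y : ℕ, x ≤ p - 2 → y ≤ p - 2 →
      (g : ZMod p) ^ x = (g : ZMod p) ^ y → x = y := by
    intro x y hx hy h
    have h' : g ^ x = g ^ y := Units.ext (by
      simpa [Units.val_pow_eq_pow_val] using h)
    rw [pow_eq_pow_iff_modEq, hord] at h'
    exact Nat.ModEq.eq_of_lt_of_lt h' (by omega) (by omega)
  intro s₁ hs₁ s₂ hs₂ s₃ hs₃ s₄ hs₄ hsum
  rw [hS] at hs₁ hs₂ hs₃ hs₄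
  obtain ⟨x₁, hx₁, rfl⟩ := hs₁
  obtain ⟨x₂, hx₂, rfl⟩ := hs₂
  obtain ⟨x₃, hx₃, rfl⟩ := hs₃
  obtain ⟨x₄, hx₄, rfl⟩ := hs₄
  rw [Prod.ext_iff] at hsum
  obtain ⟨h1, h2⟩ := hsum
  simp only [Prod.fst_add, Prod.snd_add] at h1 h2
  have hmod : (x₁ + x₂) ≡ (x₃ + x₄) [MOD (p - 1)] := by
    rw [← ZMod.natCast_eq_natCast_iff]
    push_cast
    exact h1
  have hmulU : g ^ (x₁ + x₂) = g ^ (x₃ + x₄) := by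
    rw [pow_eq_pow_iff_modEq, hord]; exact hmod
  have hmul : (g : ZMod p) ^ x₁ * (g : ZMod p) ^ x₂
      = (g : ZMod p) ^ x₃ * (g : ZMod p) ^ x₄ := by
    have := congrArg (Units.val) hmulU
    simpa [pow_add, Units.val_pow_eq_pow_val] using this
  have key : ((g : ZMod p) ^ x₁ - (g : ZMod p) ^ x₃) *
      ((g : ZMod p) ^ x₁ - (g : ZMod p) ^ x₄) = 0 := by
    linear_combination (g : ZMod p) ^ x₁ * h2 - hmul
  rcases mul_eq_zero.mp key with h | h
  · have e13 : (g : ZMod p) ^ x₁ = (g : ZMod p) ^ x₃ := sub_eq_zero.mp h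
    have e24 : (g : ZMod p) ^ x₂ = (g : ZMod p) ^ x₄ := by linear_combination h2 - e13
    obtain rfl : x₁ = x₃ := hinj _ _ hx₁ hx₃ e13
    obtain rfl : x₂ = x₄ := hinj _ _ hx₂ hx₄ e24
    exact Or.inl ⟨rfl, rfl⟩
  · have e14 : (g : ZMod p) ^ x₁ = (g : ZMod p) ^ x₄ := sub_eq_zero.mp h
    have e23 : (g : ZMod p) ^ x₂ = (g : ZMod p) ^ x₃ := by linear_combination h2 - e14
    obtain rfl : x₁ = x₄ := hinj _ _ hx₁ hx₄ e14
    obtain rfl : x₂ = x₃ := hinj _ _ hx₂ hx₃ e23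
    exact Or.inr ⟨rfl, rfl⟩
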